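/- For an Eulerian poset P of rank d > 0, the polynomial B(P;u,v) satisfies B(P;u,1) = (1−u)^d and B(P;1,v) = 0. -/

import Mathlib

open Finset Polynomial
open scoped Classical

/-- The defining recursion of the Möbius function of a finite poset. -/
def MobiusRec {P : Type*} [PartialOrder P] [Fintype P] (mu : P → P → ℤ) : Prop :=
  (∀ x : P, mu x x = 1) ∧
    ∀ x y : P, x < y → (∑ z : P, if x ≤ z ∧ z ≤ y then mu x z else 0) = 0

/-- A finite poset with rank function `ρ` is Eulerian if its Möbius function satisfies
`μ(x,y) = (-1)^(ρ(y) - ρ(x))` for all `x ≤ y`. -/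
def IsEulerian {P : Type*} [PartialOrder P] [Fintype P] (ρ : P → ℕ) : Prop :=
  ∀ mu : P → P → ℤ, MobiusRec mu → ∀ x y : P, x ≤ y → mu x y = (-1 : ℤ) ^ (ρ y - ρ x)

/-- `ρ` is a rank function of rank `d`: `ρ(⊥) = 0`, `ρ(⊤) = d`, `ρ` is monotone and
increases by one along covering relations. -/
def IsRankFunction {P : Type*} [PartialOrder P] [BoundedOrder P] (ρ : P → ℕ) (d : ℕ) : Prop :=
  ρ ⊥ = 0 ∧ ρ ⊤ = d ∧ Monotone ρ ∧ ∀ x y : P, x ⋖ y → ρ y = ρ x + 1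

/-- The truncation operator `τ_{< d/2}`, keeping only the terms of degree `< d/2`
(that is, `2*i < d`). -/
noncomputable def truncLtHalf (d : ℕ) (p : Polynomial ℤ) : Polynomial ℤ :=
  ∑ i ∈ Finset.range (p.natDegree + 1),
    if 2 * i < d then Polynomial.C (p.coeff i) * Polynomial.X ^ i else 0

/-- Stanley's polynomials `G([x,y],t)` and `H([x,y],t)` of the intervals of a finite graded
poset `P` with rank function `ρ`, given by the recursion: `G = H = 1` on rank-0 intervals,
`H([x,y],t) = ∑_{x < z ≤ y} (t-1)^(ρ(z)-ρ(x)-1) G([z,y],t)`, and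
`G([x,y],t) = τ_{< (ρ(y)-ρ(x))/2} ((1-t) H([x,y],t))`. -/
def GHSystem {P : Type*} [PartialOrder P] [Fintype P] (ρ : P → ℕ)
    (G H : P → P → Polynomial ℤ) : Prop :=
  (∀ x : P, G x x = 1 ∧ H x x = 1) ∧
  (∀ x y : P, x < y →
      H x y = ∑ z : P,
        if x < z ∧ z ≤ y then (Polynomial.X - 1) ^ (ρ z - ρ x - 1) * G z y else 0) ∧
  (∀ x y : P, x < y → G x y = truncLtHalf (ρ y - ρ x) ((1 - Polynomial.X) * H x y))

/-- The field of rational functions in the two variables `u`, `v` over `ℤ`. -/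
noncomputable abbrev KK : Type := FractionRing (MvPolynomial (Fin 2) ℤ)

/-- The variable `u` in `KK`. -/
noncomputable def UU : KK := algebraMap (MvPolynomial (Fin 2) ℤ) KK (MvPolynomial.X 0)

/-- The variable `v` in `KK`. -/
noncomputable def VV : KK := algebraMap (MvPolynomial (Fin 2) ℤ) KK (MvPolynomial.X 1)

/-- Evaluation of a two-variable polynomial `b(u,v)` at a pair of elements of `KK`. -/
noncomputable def evB (b : MvPolynomial (Fin 2) ℤ) (u v : KK) : KK :=
  MvPolynomial.aeval ![u, v] b

/-- Evaluation of a one-variable polynomial at an element of `KK`. -/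
noncomputable def evP (p : Polynomial ℤ) (t : KK) : KK := Polynomial.aeval t p

/-- The defining recursion of the polynomials `B([x,y];u,v)` of the intervals of a finite
graded poset `P`: `B = 1` on rank-0 intervals and
`∑_{x ≤ z ≤ y} B([x,z];u,v) u^(ρ(y)-ρ(z)) G([z,y],u⁻¹v) = G([x,y],uv)`. -/
def BSystem {P : Type*} [PartialOrder P] [Fintype P] (ρ : P → ℕ)
    (G : P → P → Polynomial ℤ) (B : P → P → MvPolynomial (Fin 2) ℤ) : Prop :=
  (∀ x : P, B x x = 1) ∧
  ∀ x y : P, x < y →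
    (∑ z : P, if x ≤ z ∧ z ≤ y then
        evB (B x z) UU VV * UU ^ (ρ y - ρ z) * evP (G z y) (UU⁻¹ * VV) else 0)
      = evP (G x y) (UU * VV)

set_option maxHeartbeats 1000000
set_option synthInstance.maxHeartbeats 400000

-- polynomial reflect lemmas
lemma myReflect_eq_sum (k : ℕ) (p : Polynomial ℤ) (h : p.natDegree ≤ k) :
    p.reflect k = ∑ i ∈ Finset.range (k+1), C (p.coeff i) * X ^ (k - i) := by
  ext j
  rw [coeff_reflect, finset_sum_coeff]
  simp only [coeff_C_mul, coeff_X_pow]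
  rcases le_or_gt j k with hj | hj
  · rw [revAt_le hj, Finset.sum_eq_single (k - j)]
    · rw [if_pos (by omega), mul_one]
    · intro i hi hne
      rw [if_neg (by simp at hi; omega), mul_zero]
    · intro hmem
      exact absurd (Finset.mem_range.2 (by omega)) hmem
  · rw [revAt_eq_self_of_lt hj, coeff_eq_zero_of_natDegree_lt (lt_of_le_of_lt h hj)]
    apply (Finset.sum_eq_zero _).symm
    intro i hi
    rw [if_neg (by simp at hi; omega), mul_zero]

lemma myReflect_sum {ι : Type*} (s : Finset ι) (N : ℕ) (f : ι → Polynomial ℤ) :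
    (∑ i ∈ s, f i).reflect N = ∑ i ∈ s, (f i).reflect N := by
  ext j; simp [coeff_reflect, finset_sum_coeff]

lemma myReflect_neg (N : ℕ) (p : Polynomial ℤ) : (-p).reflect N = -(p.reflect N) := by
  ext j; simp [coeff_reflect]

lemma myReflect_zero_idx (p : Polynomial ℤ) : p.reflect 0 = p := by
  ext j
  rw [coeff_reflect]
  rcases Nat.eq_zero_or_pos j with rfl | hj
  · rfl
  · rw [revAt_eq_self_of_lt hj]

lemma natDegree_X_sub_one_pow_le (a : ℕ) : ((X - 1 : Polynomial ℤ) ^ a).natDegree ≤ a := by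
  have h1 : (X - 1 : Polynomial ℤ).natDegree = 1 := by
    rw [← C_1, natDegree_X_sub_C]
  calc ((X - 1 : Polynomial ℤ) ^ a).natDegree ≤ a * (X - 1 : Polynomial ℤ).natDegree :=
        natDegree_pow_le
    _ = a := by rw [h1, mul_one]

lemma myReflect_X_sub_one_pow (a : ℕ) :
    ((X - 1 : Polynomial ℤ) ^ a).reflect a = (1 - X) ^ a := by
  induction a with
  | zero => simpa using myReflect_zero_idx 1
  | succ n ih =>
      have : ((X - 1 : Polynomial ℤ) ^ (n+1)) = (X - 1) * (X - 1) ^ n := by ring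
      rw [this]
      have hrm := Polynomial.reflect_mul (X - 1 : Polynomial ℤ) ((X - 1 : Polynomial ℤ) ^ n)
        (F := 1) (G := n) (by rw [← C_1, natDegree_X_sub_C]) (natDegree_X_sub_one_pow_le n)
      rw [show n + 1 = 1 + n by omega, hrm, ih]
      have h1 : (X - 1 : Polynomial ℤ).reflect 1 = 1 - X := by
        have : (X - 1 : Polynomial ℤ) = X + (-(C 1)) := by simp [sub_eq_add_neg]
        rw [this, reflect_add, myReflect_neg, reflect_C]
        have hx : (X : Polynomial ℤ) = X ^ 1 := (pow_one X).symm
        rw [hx, reflect_monomial]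
        simp [revAt_le]
        ring
      rw [h1]; ring

lemma term_combine (a b : ℕ) (q : Polynomial ℤ) :
    (1 - X) ^ a * ((X - 1) ^ b * q) = C ((-1) ^ a) * ((X - 1 : Polynomial ℤ) ^ (a + b) * q) := by
  have h : (1 - X : Polynomial ℤ) = C (-1) * (X - 1) := by
    simp only [map_neg, C_1]; ring
  rw [h, mul_pow, ← C_pow, pow_add]
  ring

section PosetAux
variable {P : Type*} [PartialOrder P] [Fintype P] [LocallyFiniteOrder P]

lemma sum_univ_ite_Icc {M : Type*} [AddCommMonoid M] (x y : P) (f : P → M) :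
    (∑ z : P, if x ≤ z ∧ z ≤ y then f z else 0) = ∑ z ∈ Finset.Icc x y, f z := by
  rw [← Finset.sum_filter]
  apply Finset.sum_congr _ (fun _ _ => rfl)
  ext z
  simp [Finset.mem_Icc]

lemma sum_univ_ite_Ioc {M : Type*} [AddCommMonoid M] (x y : P) (f : P → M) :
    (∑ z : P, if x < z ∧ z ≤ y then f z else 0) = ∑ z ∈ Finset.Ioc x y, f z := by
  rw [← Finset.sum_filter]
  apply Finset.sum_congr _ (fun _ _ => rfl)
  ext z
  simp [Finset.mem_Ioc]

lemma rank_strictmono (ρ : P → ℕ) (hmono : Monotone ρ)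
    (hcov : ∀ x y : P, x ⋖ y → ρ y = ρ x + 1) {x y : P} (h : x < y) : ρ x < ρ y := by
  have hwf : WellFounded ((· < ·) : P → P → Prop) := wellFounded_lt
  obtain ⟨m, hm, hmin⟩ := hwf.has_min {z | x < z ∧ z ≤ y} ⟨y, h, le_rfl⟩
  have hcov' : x ⋖ m := by
    refine ⟨hm.1, fun c hc1 hc2 => ?_⟩
    exact hmin c ⟨hc1, hc2.le.trans hm.2⟩ hc2
  have := hcov x m hcov'
  have := hmono hm.2
  omega

lemma euler_sum (ρ : P → ℕ) (hE : IsEulerian ρ) {x y : P} (h : x < y) :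
    ∑ z ∈ Finset.Icc x y, ((-1 : ℤ)) ^ (ρ z - ρ x) = 0 := by
  set mu : P → P → ℤ := fun a b => IncidenceAlgebra.mu ℤ a b with hmu
  have hrec : MobiusRec mu := by
    constructor
    · intro a; simp [hmu]
    · intro a b hab
      rw [sum_univ_ite_Icc]
      have := IncidenceAlgebra.sum_Icc_mu_right (𝕜 := ℤ) (α := P) a b
      rw [this, if_neg hab.ne]
  have hval := hE mu hrec
  have h0 := hrec.2 x y h
  rw [sum_univ_ite_Icc] at h0
  rw [← h0]
  apply Finset.sum_congr rfl
  intro z hz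
  rw [Finset.mem_Icc] at hz
  rw [hval x z hz.1]

lemma euler_sum_Ioc (ρ : P → ℕ) (hE : IsEulerian ρ) {x y : P} (h : x < y) :
    ∑ z ∈ Finset.Ioc x y, ((-1 : ℤ)) ^ (ρ z - ρ x) = -1 := by
  have h0 := euler_sum ρ hE h
  rw [Finset.Icc_eq_cons_Ioc h.le, Finset.sum_cons, Nat.sub_self, pow_zero] at h0
  omega

lemma sum_swap_Icc {M : Type*} [AddCommMonoid M] {x y : P} (hxy : x ≤ y) (f : P → P → M) :
    ∑ z ∈ Finset.Icc x y, ∑ w ∈ Finset.Icc z y, f z w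
      = ∑ w ∈ Finset.Icc x y, ∑ z ∈ Finset.Icc x w, f z w := by
  have h1 : ∀ z ∈ Finset.Icc x y, ∑ w ∈ Finset.Icc z y, f z w
      = ∑ w ∈ Finset.Icc x y, if z ≤ w then f z w else 0 := by
    intro z hz
    rw [Finset.mem_Icc] at hz
    rw [← Finset.sum_filter]
    apply Finset.sum_congr _ (fun _ _ => rfl)
    ext w
    simp only [Finset.mem_Icc, Finset.mem_filter]
    constructor
    · rintro ⟨h1, h2⟩; exact ⟨⟨hz.1.trans h1, h2⟩, h1⟩
    · rintro ⟨⟨_, h2⟩, h3⟩; exact ⟨h3, h2⟩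
  rw [Finset.sum_congr rfl h1, Finset.sum_comm]
  apply Finset.sum_congr rfl
  intro w hw
  rw [Finset.mem_Icc] at hw
  rw [← Finset.sum_filter]
  apply Finset.sum_congr _ (fun _ _ => rfl)
  ext z
  simp only [Finset.mem_Icc, Finset.mem_filter]
  constructor
  · rintro ⟨⟨h1, _⟩, h3⟩; exact ⟨h1, h3⟩
  · rintro ⟨h1, h2⟩; exact ⟨⟨h1, h2.trans hw.2⟩, h2⟩

lemma sum_swap_Ioc {M : Type*} [AddCommMonoid M] {x y : P} (f : P → P → M) :
    ∑ z ∈ Finset.Ioc x y, ∑ w ∈ Finset.Icc z y, f z w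
      = ∑ w ∈ Finset.Ioc x y, ∑ z ∈ Finset.Ioc x w, f z w := by
  have h1 : ∀ z ∈ Finset.Ioc x y, ∑ w ∈ Finset.Icc z y, f z w
      = ∑ w ∈ Finset.Ioc x y, if z ≤ w then f z w else 0 := by
    intro z hz
    rw [Finset.mem_Ioc] at hz
    rw [← Finset.sum_filter]
    apply Finset.sum_congr _ (fun _ _ => rfl)
    ext w
    simp only [Finset.mem_Icc, Finset.mem_Ioc, Finset.mem_filter]
    constructor
    · rintro ⟨h1, h2⟩; exact ⟨⟨lt_of_lt_of_le hz.1 h1, h2⟩, h1⟩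
    · rintro ⟨⟨_, h2⟩, h3⟩; exact ⟨h3, h2⟩
  rw [Finset.sum_congr rfl h1, Finset.sum_comm]
  apply Finset.sum_congr rfl
  intro w hw
  rw [Finset.mem_Ioc] at hw
  rw [← Finset.sum_filter]
  apply Finset.sum_congr _ (fun _ _ => rfl)
  ext z
  simp only [Finset.mem_Ioc, Finset.mem_filter]
  constructor
  · rintro ⟨⟨h1, _⟩, h3⟩; exact ⟨h1, h3⟩
  · rintro ⟨h1, h2⟩; exact ⟨⟨h1, h2.trans hw.2⟩, h2⟩

end PosetAux

lemma coeff_truncLtHalf (d : ℕ) (p : Polynomial ℤ) (j : ℕ) :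
    (truncLtHalf d p).coeff j = if 2 * j < d then p.coeff j else 0 := by
  rw [truncLtHalf, finset_sum_coeff]
  rcases le_or_gt j p.natDegree with hj | hj
  · rw [Finset.sum_eq_single j]
    · split_ifs with h
      · rw [coeff_C_mul, coeff_X_pow, if_pos rfl, mul_one]
      · rw [coeff_zero]
    · intro i hi hne
      split_ifs
      · rw [coeff_C_mul, coeff_X_pow, if_neg (fun hh => hne hh.symm), mul_zero]
      · rw [coeff_zero]
    · intro hmem
      exact absurd (Finset.mem_range.2 (by omega)) hmem
  · rw [coeff_eq_zero_of_natDegree_lt hj, ite_self]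
    apply Finset.sum_eq_zero
    intro i hi
    rw [Finset.mem_range] at hi
    split_ifs
    · rw [coeff_C_mul, coeff_X_pow, if_neg (by omega), mul_zero]
    · rw [coeff_zero]


section GH
variable {P : Type*} [PartialOrder P] [Fintype P] [LocallyFiniteOrder P]
variable {ρ : P → ℕ} {G H : P → P → Polynomial ℤ}

lemma H_eq (hGH : GHSystem ρ G H) {x y : P} (h : x < y) :
    H x y = ∑ z ∈ Finset.Ioc x y, (X - 1) ^ (ρ z - ρ x - 1) * G z y := by
  rw [hGH.2.1 x y h, sum_univ_ite_Ioc]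

lemma coeff_G (hGH : GHSystem ρ G H) {x y : P} (h : x < y) (j : ℕ) :
    (G x y).coeff j = if 2*j < ρ y - ρ x then ((1 - X) * H x y).coeff j else 0 := by
  rw [hGH.2.2 x y h, coeff_truncLtHalf]

lemma degG_lt (hGH : GHSystem ρ G H)
    (hstrict : ∀ x y : P, x < y → ρ x < ρ y) {x y : P} (h : x < y) :
    2 * (G x y).natDegree < ρ y - ρ x := by
  by_contra hc
  push_neg at hc
  have hk : 1 ≤ ρ y - ρ x := by have := hstrict x y h; omega
  rcases eq_or_ne (G x y) 0 with h0 | h0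
  · rw [h0, natDegree_zero] at hc; omega
  · have hco := coeff_G hGH h (G x y).natDegree
    rw [if_neg (by omega)] at hco
    exact h0 (Polynomial.leadingCoeff_eq_zero.mp hco)

lemma degG_le (hGH : GHSystem ρ G H)
    (hstrict : ∀ x y : P, x < y → ρ x < ρ y) {x y : P} (h : x ≤ y) :
    (G x y).natDegree ≤ ρ y - ρ x := by
  rcases eq_or_lt_of_le h with rfl | hlt
  · rw [(hGH.1 x).1, natDegree_one]; omega
  · have := degG_lt hGH hstrict hlt; omega

lemma degP_le (hGH : GHSystem ρ G H) (hmono : Monotone ρ)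
    (hstrict : ∀ x y : P, x < y → ρ x < ρ y) {x y : P} (h : x < y) :
    ((1 - X) * H x y).natDegree ≤ ρ y - ρ x := by
  rw [H_eq hGH h, Finset.mul_sum]
  apply natDegree_sum_le_of_forall_le
  intro z hz
  rw [Finset.mem_Ioc] at hz
  have h1 : (1 - X : Polynomial ℤ).natDegree ≤ 1 := by
    have : (1 - X : Polynomial ℤ) = -(X - 1) := by ring
    rw [this, natDegree_neg, ← C_1, natDegree_X_sub_C]
  have h2 := natDegree_X_sub_one_pow_le (ρ z - ρ x - 1)
  have h3 := degG_le hGH hstrict hz.2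
  have hxz := hstrict x z hz.1
  have hzy := hmono hz.2
  calc ((1 - X) * ((X - 1) ^ (ρ z - ρ x - 1) * G z y)).natDegree
      ≤ (1 - X : Polynomial ℤ).natDegree + ((X - 1) ^ (ρ z - ρ x - 1) * G z y).natDegree :=
        natDegree_mul_le
    _ ≤ (1 - X : Polynomial ℤ).natDegree
        + (((X - 1 : Polynomial ℤ) ^ (ρ z - ρ x - 1)).natDegree + (G z y).natDegree) := by
        have := natDegree_mul_le (p := (X - 1 : Polynomial ℤ) ^ (ρ z - ρ x - 1)) (q := G z y)
        omega
    _ ≤ ρ y - ρ x := by omega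

lemma F5 (hGH : GHSystem ρ G H) (hmono : Monotone ρ)
    (hstrict : ∀ x y : P, x < y → ρ x < ρ y)
    (heuler : ∀ x y : P, x < y → ∑ z ∈ Finset.Ioc x y, ((-1 : ℤ)) ^ (ρ z - ρ x) = -1) :
    ∀ n : ℕ, ∀ x y : P, x ≤ y → ρ y - ρ x < n →
      (G x y).reflect (ρ y - ρ x) = ∑ w ∈ Finset.Icc x y, (X - 1) ^ (ρ w - ρ x) * G w y := by
  intro n
  induction n with
  | zero => intro x y _ h; omega
  | succ n ih =>
    intro x y hxy hn
    rcases eq_or_lt_of_le hxy with rfl | hlt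
    · rw [Nat.sub_self, myReflect_zero_idx, Finset.Icc_self, Finset.sum_singleton,
        Nat.sub_self, pow_zero, one_mul]
    · have hk1 : 1 ≤ ρ y - ρ x := by have := hstrict x y hlt; omega
      set k := ρ y - ρ x with hk
      set Pp := (1 - X) * H x y with hPp
      set S := ∑ z ∈ Finset.Ioc x y, (X - 1) ^ (ρ z - ρ x) * G z y with hS
      have hPS : Pp = -S := by
        rw [hPp, hS, H_eq hGH hlt, Finset.mul_sum, ← Finset.sum_neg_distrib]
        apply Finset.sum_congr rfl
        intro z hz
        rw [Finset.mem_Ioc] at hz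
        have ha : ρ z - ρ x - 1 + 1 = ρ z - ρ x := by have := hstrict x z hz.1; omega
        calc (1 - X) * ((X - 1) ^ (ρ z - ρ x - 1) * G z y)
            = -((X - 1) ^ (ρ z - ρ x - 1 + 1) * G z y) := by rw [pow_succ]; ring
          _ = -((X - 1) ^ (ρ z - ρ x) * G z y) := by rw [ha]
      have hrs : S.reflect k = -S := by
        rw [hS, myReflect_sum]
        have hterm : ∀ z ∈ Finset.Ioc x y, ((X - 1) ^ (ρ z - ρ x) * G z y).reflect k
            = ∑ w ∈ Finset.Icc z y,
                Polynomial.C ((-1 : ℤ) ^ (ρ z - ρ x)) * ((X - 1) ^ (ρ w - ρ x) * G w y) := by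
          intro z hz
          rw [Finset.mem_Ioc] at hz
          have hxz := hstrict x z hz.1
          have hzy := hmono hz.2
          have hsplit : k = (ρ z - ρ x) + (ρ y - ρ z) := by omega
          rw [hsplit, Polynomial.reflect_mul _ _ (natDegree_X_sub_one_pow_le _)
              (degG_le hGH hstrict hz.2), myReflect_X_sub_one_pow,
              ih z y hz.2 (by omega), Finset.mul_sum]
          apply Finset.sum_congr rfl
          intro w hw
          rw [Finset.mem_Icc] at hw
          rw [term_combine]
          have hexp : (ρ z - ρ x) + (ρ w - ρ z) = ρ w - ρ x := by
            have := hmono hw.1; omega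
          rw [hexp]
        rw [Finset.sum_congr rfl hterm, sum_swap_Ioc]
        rw [← Finset.sum_neg_distrib]
        apply Finset.sum_congr rfl
        intro w hw
        rw [Finset.mem_Ioc] at hw
        rw [← Finset.sum_mul, ← map_sum, heuler x w hw.1]
        simp only [map_neg, map_one]
        ring
      have hanti : Pp.reflect k = -Pp := by
        rw [hPS, myReflect_neg, hrs, neg_neg]
      have hGc : ∀ j, (G x y).coeff j = if 2*j < k then Pp.coeff j else 0 :=
        fun j => coeff_G hGH hlt j
      have hPd : Pp.natDegree ≤ k := degP_le hGH hmono hstrict hlt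
      have hac : ∀ j, Pp.coeff (revAt k j) = -Pp.coeff j := fun j => by
        rw [← coeff_reflect, hanti, coeff_neg]
      rw [Finset.Icc_eq_cons_Ioc hlt.le, Finset.sum_cons, Nat.sub_self, pow_zero, one_mul]
      rw [show (∑ z ∈ Finset.Ioc x y, (X - 1) ^ (ρ z - ρ x) * G z y) = -Pp from by
        rw [hPS, neg_neg]]
      ext j
      rw [coeff_reflect, coeff_add, coeff_neg, hGc j]
      rcases le_or_gt j k with hj | hj
      · rw [revAt_le hj, hGc (k - j)]
        rcases lt_trichotomy (2*j) k with h2 | h2 | h2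
        · rw [if_pos h2, if_neg (by omega)]
          ring
        · have hkj : k - j = j := by omega
          have hz : Pp.coeff j = 0 := by
            have := hac j
            rw [revAt_le hj, hkj] at this
            omega
          rw [if_neg (by omega), if_neg (by omega), hz]
          ring
        · have := hac j
          rw [revAt_le hj] at this
          rw [if_pos (by omega), if_neg (by omega), this]
          ring
      · rw [if_neg (by omega), revAt_eq_self_of_lt hj, hGc j, if_neg (by omega),
          coeff_eq_zero_of_natDegree_lt (lt_of_le_of_lt hPd hj)]
        ring

lemma starId (hGH : GHSystem ρ G H) (hmono : Monotone ρ)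
    (hstrict : ∀ x y : P, x < y → ρ x < ρ y)
    (heulerI : ∀ x y : P, x < y → ∑ z ∈ Finset.Ioc x y, ((-1 : ℤ)) ^ (ρ z - ρ x) = -1)
    (heuler : ∀ x y : P, x < y → ∑ z ∈ Finset.Icc x y, ((-1 : ℤ)) ^ (ρ z - ρ x) = 0)
    {x y : P} (hxy : x ≤ y) :
    ∑ z ∈ Finset.Icc x y, (1 - X) ^ (ρ z - ρ x) * (G z y).reflect (ρ y - ρ z) = G x y := by
  have hterm : ∀ z ∈ Finset.Icc x y, (1 - X) ^ (ρ z - ρ x) * (G z y).reflect (ρ y - ρ z)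
      = ∑ w ∈ Finset.Icc z y,
          Polynomial.C ((-1 : ℤ) ^ (ρ z - ρ x)) * ((X - 1) ^ (ρ w - ρ x) * G w y) := by
    intro z hz
    rw [Finset.mem_Icc] at hz
    rw [F5 hGH hmono hstrict heulerI (ρ y - ρ z + 1) z y hz.2 (by omega), Finset.mul_sum]
    apply Finset.sum_congr rfl
    intro w hw
    rw [Finset.mem_Icc] at hw
    rw [term_combine]
    have hexp : (ρ z - ρ x) + (ρ w - ρ z) = ρ w - ρ x := by
      have h1 := hmono hw.1
      have h2 := hmono hz.1
      omega
    rw [hexp]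
  rw [Finset.sum_congr rfl hterm, sum_swap_Icc hxy]
  rw [Finset.sum_eq_single_of_mem x (Finset.mem_Icc.2 ⟨le_refl x, hxy⟩)]
  · rw [Finset.Icc_self, Finset.sum_singleton]
    simp
  · intro w hw hne
    rw [Finset.mem_Icc] at hw
    have hxw : x < w := lt_of_le_of_ne hw.1 (Ne.symm hne)
    rw [← Finset.sum_mul, ← map_sum, heuler x w hxw]
    simp

end GH

noncomputable def hatP (k : ℕ) (p : Polynomial ℤ) : MvPolynomial (Fin 2) ℤ :=
  ∑ i ∈ Finset.range (k+1),
    MvPolynomial.C (p.coeff i) * (MvPolynomial.X 1) ^ i * (MvPolynomial.X 0) ^ (k - i)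

lemma UU_ne_zero : (UU : KK) ≠ 0 := by
  rw [UU]
  intro h
  exact MvPolynomial.X_ne_zero 0
    ((map_eq_zero_iff _ (IsFractionRing.injective (MvPolynomial (Fin 2) ℤ) KK)).mp h)

lemma aeval_UV_eq_algebraMap (b : MvPolynomial (Fin 2) ℤ) :
    MvPolynomial.aeval ![UU, VV] b = algebraMap (MvPolynomial (Fin 2) ℤ) KK b := by
  have h : MvPolynomial.aeval (R := ℤ) ![UU, VV]
      = IsScalarTower.toAlgHom ℤ (MvPolynomial (Fin 2) ℤ) KK := by
    apply MvPolynomial.algHom_ext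
    intro i
    fin_cases i <;> simp [UU, VV]
  rw [h, IsScalarTower.coe_toAlgHom']

lemma aeval_UV_injective :
    Function.Injective (MvPolynomial.aeval (R := ℤ) ![UU, VV]) := by
  intro a b hab
  rw [aeval_UV_eq_algebraMap, aeval_UV_eq_algebraMap] at hab
  exact IsFractionRing.injective (MvPolynomial (Fin 2) ℤ) KK hab

lemma Phi_hatP {k : ℕ} {p : Polynomial ℤ} (h : p.natDegree ≤ k) :
    MvPolynomial.aeval ![UU, VV] (hatP k p) = UU ^ k * evP p (UU⁻¹ * VV) := by
  rw [hatP, map_sum, evP, Polynomial.aeval_eq_sum_range' (lt_of_le_of_lt h (Nat.lt_succ_self k)),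
    Finset.mul_sum]
  apply Finset.sum_congr rfl
  intro i hi
  rw [Finset.mem_range] at hi
  simp only [map_mul, map_pow, MvPolynomial.aeval_C, MvPolynomial.aeval_X,
    Matrix.cons_val_one, Matrix.head_cons, Matrix.cons_val_zero, zsmul_eq_mul]
  rw [Algebra.smul_def]
  simp only [eq_intCast]
  have hui : (UU : KK) ^ i ≠ 0 := pow_ne_zero _ UU_ne_zero
  have hsplit : (UU : KK) ^ k = UU ^ (k - i) * UU ^ i := by
    rw [← pow_add, Nat.sub_add_cancel (by omega)]
  rw [hsplit, mul_pow, inv_pow]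
  have hinv : (UU : KK) ^ i * UU⁻¹ ^ i = 1 := by rw [inv_pow, mul_inv_cancel₀ hui]
  linear_combination (-((p.coeff i : KK) * VV ^ i * UU ^ (k - i))) * hinv

lemma psi1_hatP {k : ℕ} {p : Polynomial ℤ} (h : p.natDegree ≤ k) :
    MvPolynomial.aeval ![(Polynomial.X : Polynomial ℤ), 1] (hatP k p) = p.reflect k := by
  rw [hatP, map_sum, myReflect_eq_sum k p h]
  apply Finset.sum_congr rfl
  intro i hi
  simp only [map_mul, map_pow, MvPolynomial.aeval_C, MvPolynomial.aeval_X,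
    Matrix.cons_val_one, Matrix.head_cons, Matrix.cons_val_zero, one_pow, mul_one]
  rw [← Polynomial.C_eq_algebraMap]

lemma psi2_hatP {k : ℕ} {p : Polynomial ℤ} (h : p.natDegree ≤ k) :
    MvPolynomial.aeval ![(1 : Polynomial ℤ), Polynomial.X] (hatP k p) = p := by
  rw [hatP, map_sum]
  conv_rhs => rw [p.as_sum_range' (k+1) (lt_of_le_of_lt h (Nat.lt_succ_self k))]
  apply Finset.sum_congr rfl
  intro i hi
  simp only [map_mul, map_pow, MvPolynomial.aeval_C, MvPolynomial.aeval_X,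
    Matrix.cons_val_one, Matrix.head_cons, Matrix.cons_val_zero, one_pow, mul_one]
  rw [← Polynomial.C_eq_algebraMap, C_mul_X_pow_eq_monomial]

section EK
variable {P : Type*} [PartialOrder P] [Fintype P] [LocallyFiniteOrder P]
variable {ρ : P → ℕ} {G H : P → P → Polynomial ℤ} {B : P → P → MvPolynomial (Fin 2) ℤ}

lemma Ekey (hGH : GHSystem ρ G H) (hB : BSystem ρ G B)
    (hstrict : ∀ x y : P, x < y → ρ x < ρ y) {x y : P} (hxy : x < y) :
    (∑ z ∈ Finset.Icc x y, B x z * hatP (ρ y - ρ z) (G z y))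
      = Polynomial.aeval (MvPolynomial.X 0 * MvPolynomial.X 1 : MvPolynomial (Fin 2) ℤ)
          (G x y) := by
  apply aeval_UV_injective
  have hBe := hB.2 x y hxy
  rw [sum_univ_ite_Icc] at hBe
  rw [map_sum]
  calc ∑ z ∈ Finset.Icc x y, MvPolynomial.aeval ![UU, VV] (B x z * hatP (ρ y - ρ z) (G z y))
      = ∑ z ∈ Finset.Icc x y,
          evB (B x z) UU VV * UU ^ (ρ y - ρ z) * evP (G z y) (UU⁻¹ * VV) := by
        apply Finset.sum_congr rfl
        intro z hz
        rw [Finset.mem_Icc] at hz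
        rw [map_mul, Phi_hatP (degG_le hGH hstrict hz.2), mul_assoc]
        rfl
    _ = evP (G x y) (UU * VV) := hBe
    _ = MvPolynomial.aeval ![UU, VV]
          (Polynomial.aeval (MvPolynomial.X 0 * MvPolynomial.X 1 : MvPolynomial (Fin 2) ℤ)
            (G x y)) := by
        rw [← Polynomial.aeval_algHom_apply (MvPolynomial.aeval (R := ℤ) ![UU, VV]) _ (G x y)]
        simp only [map_mul, MvPolynomial.aeval_X, Matrix.cons_val_one, Matrix.head_cons,
          Matrix.cons_val_zero]
        rfl

end EK

/-- For an Eulerian poset `P` of rank `d > 0`, the polynomial `B(P;u,v)` satisfies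
`B(P;u,1) = (1-u)^d` and `B(P;1,v) = 0`. -/
theorem B_specializations {P : Type*} [PartialOrder P] [BoundedOrder P] [Fintype P]
    (ρ : P → ℕ) (d : ℕ) (hrk : IsRankFunction ρ d) (hE : IsEulerian ρ)
    (G H : P → P → Polynomial ℤ) (hGH : GHSystem ρ G H)
    (B : P → P → MvPolynomial (Fin 2) ℤ) (hB : BSystem ρ G B) (hd : 0 < d) :
    MvPolynomial.aeval ![Polynomial.X, (1 : Polynomial ℤ)] (B ⊥ ⊤)
        = (1 - Polynomial.X) ^ d ∧
    MvPolynomial.aeval ![(1 : Polynomial ℤ), Polynomial.X] (B ⊥ ⊤) = 0 := by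
  classical
  letI : LocallyFiniteOrder P := Fintype.toLocallyFiniteOrder
  obtain ⟨hbot, htop, hmono, hcov⟩ := hrk
  have hstrict : ∀ x y : P, x < y → ρ x < ρ y := fun x y h => rank_strictmono ρ hmono hcov h
  have heuler : ∀ x y : P, x < y → ∑ z ∈ Finset.Icc x y, ((-1 : ℤ)) ^ (ρ z - ρ x) = 0 :=
    fun x y h => euler_sum ρ hE h
  have heulerI : ∀ x y : P, x < y → ∑ z ∈ Finset.Ioc x y, ((-1 : ℤ)) ^ (ρ z - ρ x) = -1 :=
    fun x y h => euler_sum_Ioc ρ hE h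
  have hbt : (⊥ : P) < ⊤ := by
    rcases eq_or_lt_of_le (bot_le : (⊥ : P) ≤ ⊤) with h | h
    · exfalso; rw [← h] at htop; omega
    · exact h
  have hE1 : ∀ x y : P, x < y →
      (∑ z ∈ Finset.Icc x y,
        (MvPolynomial.aeval ![(Polynomial.X : Polynomial ℤ), 1]) (B x z)
          * (G z y).reflect (ρ y - ρ z)) = G x y := by
    intro x y hxy
    have h0 := congrArg (MvPolynomial.aeval (R := ℤ) ![(Polynomial.X : Polynomial ℤ), 1])
      (Ekey hGH hB hstrict hxy)
    rw [map_sum, ← Polynomial.aeval_algHom_apply] at h0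
    simp only [map_mul, MvPolynomial.aeval_X, Matrix.cons_val_zero, Matrix.cons_val_one,
      Matrix.head_cons, mul_one, Polynomial.aeval_X_left_apply] at h0
    rw [← h0]
    apply Finset.sum_congr rfl
    intro z hz
    rw [Finset.mem_Icc] at hz
    rw [psi1_hatP (degG_le hGH hstrict hz.2)]
  have hE2 : ∀ x y : P, x < y →
      (∑ z ∈ Finset.Icc x y,
        (MvPolynomial.aeval ![(1 : Polynomial ℤ), Polynomial.X]) (B x z) * G z y)
        = G x y := by
    intro x y hxy
    have h0 := congrArg (MvPolynomial.aeval (R := ℤ) ![(1 : Polynomial ℤ), Polynomial.X])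
      (Ekey hGH hB hstrict hxy)
    rw [map_sum, ← Polynomial.aeval_algHom_apply] at h0
    simp only [map_mul, MvPolynomial.aeval_X, Matrix.cons_val_zero, Matrix.cons_val_one,
      Matrix.head_cons, one_mul, Polynomial.aeval_X_left_apply] at h0
    rw [← h0]
    apply Finset.sum_congr rfl
    intro z hz
    rw [Finset.mem_Icc] at hz
    rw [psi2_hatP (degG_le hGH hstrict hz.2)]
  have hB1 : ∀ n : ℕ, ∀ x y : P, x ≤ y → ρ y - ρ x < n →
      (MvPolynomial.aeval ![(Polynomial.X : Polynomial ℤ), 1]) (B x y)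
        = (1 - Polynomial.X) ^ (ρ y - ρ x) := by
    intro n
    induction n with
    | zero => intro x y _ h; omega
    | succ n ih =>
      intro x y hxy hn
      rcases eq_or_lt_of_le hxy with rfl | hlt
      · rw [hB.1 x, Nat.sub_self, pow_zero, map_one]
      · have h1 := hE1 x y hlt
        have hstar := starId hGH hmono hstrict heulerI heuler hxy
        rw [Finset.Icc_eq_cons_Ico hxy, Finset.sum_cons, Nat.sub_self, myReflect_zero_idx,
          (hGH.1 y).1, mul_one] at h1 hstar
        have hIco : (∑ z ∈ Finset.Ico x y,
            (MvPolynomial.aeval ![(Polynomial.X : Polynomial ℤ), 1]) (B x z)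
              * (G z y).reflect (ρ y - ρ z))
            = ∑ z ∈ Finset.Ico x y,
                (1 - Polynomial.X) ^ (ρ z - ρ x) * (G z y).reflect (ρ y - ρ z) := by
          apply Finset.sum_congr rfl
          intro z hz
          rw [Finset.mem_Ico] at hz
          rw [ih x z hz.1 (by have := hstrict z y hz.2; have := hmono hz.1; omega)]
        rw [hIco] at h1
        exact add_right_cancel (h1.trans hstar.symm)
  have hB2 : ∀ n : ℕ, ∀ x y : P, x < y → ρ y - ρ x < n →
      (MvPolynomial.aeval ![(1 : Polynomial ℤ), Polynomial.X]) (B x y) = 0 := by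
    intro n
    induction n with
    | zero => intro x y _ h; omega
    | succ n ih =>
      intro x y hlt hn
      have h2 := hE2 x y hlt
      rw [Finset.Icc_eq_cons_Ioc hlt.le, Finset.sum_cons, Finset.Ioc_eq_cons_Ioo hlt,
        Finset.sum_cons, hB.1, map_one, one_mul, (hGH.1 y).1, mul_one] at h2
      rw [Finset.sum_eq_zero (fun z hz => by
        rw [Finset.mem_Ioo] at hz
        rw [ih x z hz.1 (by have := hstrict z y hz.2; have := hmono hz.1.le; omega), zero_mul])]
        at h2
      rw [add_zero] at h2
      have h3 : G x y + (MvPolynomial.aeval ![(1 : Polynomial ℤ), Polynomial.X]) (B x y)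
          = G x y + 0 := by rw [add_zero]; exact h2
      exact add_left_cancel h3
  constructor
  · have h := hB1 (d+1) ⊥ ⊤ bot_le (by rw [htop, hbot]; omega)
    rw [htop, hbot, Nat.sub_zero] at h
    exact h
  · exact hB2 (d+1) ⊥ ⊤ hbt (by rw [htop, hbot]; omega)
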